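/- Assume the W construction, Condition (C2), Condition (D), and Σ_{k≥1} ‖β_k‖² < ∞. For each k ≥ 1 set M_k := I_n − X(XᵀΛ_k⁻¹X)⁻¹XᵀΛ_k⁻¹. Then the expected transformed sum of squares due to regression is finite: Σ_{k≥1} E[ Y_kᵀ ( W_kᵀΛ_k⁻¹W_k − W_kᵀM_kᵀΛ_k⁻¹M_kW_k ) Y_k ] < ∞, and the random series Σ_{k≥1} Y_kᵀ ( W_kᵀΛ_k⁻¹W_k − W_kᵀM_kᵀΛ_k⁻¹M_kW_k ) Y_k converges almost surely (each summand is nonnegative). -/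

import Mathlib

open MeasureTheory ProbabilityTheory Matrix
open scoped Classical

noncomputable def Matrix.PosSemidef.sqrt {n : ℕ} {S : Matrix (Fin n) (Fin n) ℝ}
    (h : S.PosSemidef) : Matrix (Fin n) (Fin n) ℝ :=
  (h.1.eigenvectorUnitary : Matrix (Fin n) (Fin n) ℝ) *
    diagonal ((↑) ∘ (√·) ∘ h.1.eigenvalues) *
    (star h.1.eigenvectorUnitary : Matrix (Fin n) (Fin n) ℝ)

lemma psd_sqrt_mul_self {n : ℕ} {S : Matrix (Fin n) (Fin n) ℝ} (h : S.PosSemidef) :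
    h.sqrt * h.sqrt = S := by
  have hU : (star h.1.eigenvectorUnitary : Matrix (Fin n) (Fin n) ℝ) *
      (h.1.eigenvectorUnitary : Matrix (Fin n) (Fin n) ℝ) = 1 := Unitary.coe_star_mul_self _
  have hD : diagonal ((↑) ∘ (√·) ∘ h.1.eigenvalues) * diagonal ((↑) ∘ (√·) ∘ h.1.eigenvalues)
      = diagonal (RCLike.ofReal ∘ h.1.eigenvalues : Fin n → ℝ) := by
    rw [diagonal_mul_diagonal]
    congr 1; funext i
    simp [Real.mul_self_sqrt (h.eigenvalues_nonneg i)]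
  conv_rhs => rw [h.1.spectral_theorem, Unitary.conjStarAlgAut_apply]
  rw [← hD]
  simp only [Matrix.PosSemidef.sqrt, Matrix.mul_assoc]
  rw [← Matrix.mul_assoc _ _ (diagonal _ * _), hU, Matrix.one_mul]

lemma psd_sqrt_conjTranspose {n : ℕ} {S : Matrix (Fin n) (Fin n) ℝ} (h : S.PosSemidef) :
    h.sqrtᴴ = h.sqrt := by
  rw [← Matrix.star_eq_conjTranspose]
  simp only [Matrix.PosSemidef.sqrt, star_mul, star_star, Matrix.mul_assoc]
  congr 2
  rw [Matrix.star_eq_conjTranspose, diagonal_conjTranspose]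
  simp

/-- The multivariate Gaussian measure on `ℝⁿ` with mean `μ` and (positive
semidefinite) covariance matrix `S`. -/
noncomputable def multivariateGaussian {n : ℕ} (μ : Fin n → ℝ)
    (S : Matrix (Fin n) (Fin n) ℝ) : Measure (Fin n → ℝ) :=
  if h : S.PosSemidef then
    (Measure.pi fun _ : Fin n => gaussianReal 0 1).map fun x => μ + h.sqrt.mulVec x
  else 0


lemma integrable_sq_gaussian : Integrable (fun y : ℝ => y ^ 2) (gaussianReal 0 1) := by
  rw [gaussianReal_of_var_ne_zero 0 one_ne_zero]
  rw [integrable_withDensity_iff (measurable_gaussianPDF 0 1)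
    (Filter.Eventually.of_forall fun x => ENNReal.ofReal_lt_top)]
  have h2 : ∀ x : ℝ, (gaussianPDF 0 1 x).toReal = gaussianPDFReal 0 1 x := fun x =>
    ENNReal.toReal_ofReal (gaussianPDFReal_nonneg 0 1 x)
  simp only [h2, gaussianPDFReal]
  have hint : Integrable fun x : ℝ => x ^ (2:ℝ) * Real.exp (-(2⁻¹) * x ^ 2) :=
    integrable_rpow_mul_exp_neg_mul_sq (by norm_num) (by norm_num)
  have : ∀ x : ℝ, x ^ (2:ℝ) = x ^ (2:ℕ) := fun x => by
    rw [show ((2:ℝ) = ((2:ℕ):ℝ)) by norm_num, Real.rpow_natCast]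
  simp only [this] at hint
  refine ((hint.const_mul ((Real.sqrt (2 * Real.pi * 1))⁻¹)).congr
    (Filter.Eventually.of_forall fun a => ?_))
  push_cast
  ring_nf



lemma c2_bound {M c ρ ϱ w l : ℝ} (hM : 0 < M) (hc : 0 < c) (hρ : 0 ≤ ρ) (hϱ : 1 < ϱ)
    (k : ℕ) (hw : 0 < w) (hl : 0 < l)
    (hw' : w ≤ M * ((k:ℝ)+1) ^ (-(ρ + ϱ))) (hl' : c * ((k:ℝ)+1) ^ (-ρ) ≤ l) :
    w * l⁻¹ * w ≤ M^2 / c := by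
  set t : ℝ := (k:ℝ)+1 with ht
  have ht1 : (1:ℝ) ≤ t := by
    have := Nat.cast_nonneg (α := ℝ) k
    simp only [ht]; linarith
  have ht0 : (0:ℝ) < t := lt_of_lt_of_le one_pos ht1
  have hK0 : 0 < t ^ (-(ρ+ϱ)) := Real.rpow_pos_of_pos ht0 _
  have hl0 : 0 < c * t ^ (-ρ) := by positivity
  have h1 : l⁻¹ ≤ (c * t ^ (-ρ))⁻¹ := by
    apply inv_anti₀ hl0 hl'
  have step1 : w * l⁻¹ * w ≤ (M * t ^ (-(ρ+ϱ))) * ((c * t ^ (-ρ))⁻¹) * (M * t ^ (-(ρ+ϱ))) := by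
    have h0 : 0 ≤ l⁻¹ := inv_nonneg.mpr hl.le
    have := mul_le_mul (mul_le_mul hw' h1 h0 (by positivity)) hw' hw.le (by positivity)
    exact this
  have step2 : (M * t ^ (-(ρ+ϱ))) * ((c * t ^ (-ρ))⁻¹) * (M * t ^ (-(ρ+ϱ)))
      = M^2/c * (t ^ (-(ρ+ϱ) + -(ρ+ϱ) + ρ)) := by
    rw [Real.rpow_add ht0, Real.rpow_add ht0, Real.rpow_neg ht0.le ρ, mul_inv]
    have : (t ^ ρ)⁻¹⁻¹ = t ^ ρ := inv_inv _
    field_simp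
  have step3 : t ^ (-(ρ+ϱ) + -(ρ+ϱ) + ρ) ≤ 1 :=
    Real.rpow_le_one_of_one_le_of_nonpos ht1 (by linarith)
  calc w * l⁻¹ * w ≤ M^2/c * (t ^ (-(ρ+ϱ) + -(ρ+ϱ) + ρ)) := by rw [← step2]; exact step1
    _ ≤ M^2/c * 1 := by
        apply mul_le_mul_of_nonneg_left step3 (by positivity)
    _ = M^2/c := mul_one _

lemma pi_integrable_sq {m : ℕ} (j : Fin m) :
    Integrable (fun x : Fin m → ℝ => x j ^ 2) (Measure.pi fun _ => gaussianReal 0 1) := by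
  letI : MeasureSpace ℝ := ⟨gaussianReal 0 1⟩
  haveI : SigmaFinite (volume : Measure ℝ) := by
    show SigmaFinite (gaussianReal 0 1); infer_instance
  haveI : IsFiniteMeasure (volume : Measure ℝ) := by
    show IsFiniteMeasure (gaussianReal 0 1); infer_instance
  have hf : ∀ t : Fin m, Integrable (fun y : ℝ => if t = j then y ^ 2 else 1) volume := by
    intro t
    by_cases htj : t = j
    · subst htj
      simp only [if_pos rfl]; exact integrable_sq_gaussian
    · simp only [if_neg htj]
      exact integrable_const 1
  have h := MeasureTheory.Integrable.fintype_prod (ι := Fin m) (E := ℝ)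
      (f := fun t y => if t = j then y ^ 2 else 1) hf
  have heq : (fun x : Fin m → ℝ => ∏ t, if t = j then x t ^ 2 else 1)
      = fun x : Fin m → ℝ => x j ^ 2 := by
    funext x
    rw [Finset.prod_ite_eq' Finset.univ j (fun t => x t ^ 2)]
    simp
  rwa [heq] at h

lemma pi_integrable_normsq (m : ℕ) :
    Integrable (fun x : Fin m → ℝ => ∑ j, x j ^ 2) (Measure.pi fun _ => gaussianReal 0 1) :=
  integrable_finset_sum _ fun j _ => pi_integrable_sq j



lemma matrix_quad_key {n p : ℕ}
    (L : Matrix (Fin n) (Fin n) ℝ) (hL : L.PosDef)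
    (X : Matrix (Fin n) (Fin p) ℝ) (hX : IsUnit (Xᵀ * L⁻¹ * X))
    (Ψ : Matrix (Fin n) (Fin n) ℝ) (hΨ : Ψ * Ψᵀ = 1)
    (a b : Fin n → ℝ) (ha : ∀ i, a i ≠ 0)
    (hLspec : L = Ψ * diagonal a * Ψᵀ)
    (W : Matrix (Fin n) (Fin n) ℝ) (hW : W = Ψ * diagonal b * Ψᵀ)
    (Mk : Matrix (Fin n) (Fin n) ℝ)
    (hMk : Mk = 1 - X * (Xᵀ * L⁻¹ * X)⁻¹ * Xᵀ * L⁻¹)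
    (C : ℝ) (hC : ∀ i, b i * (a i)⁻¹ * b i ≤ C)
    (y : Fin n → ℝ) :
    0 ≤ y ⬝ᵥ (Wᵀ * L⁻¹ * W - Wᵀ * Mkᵀ * L⁻¹ * Mk * W).mulVec y ∧
      y ⬝ᵥ (Wᵀ * L⁻¹ * W - Wᵀ * Mkᵀ * L⁻¹ * Mk * W).mulVec y ≤ C * (y ⬝ᵥ y) := by
  have hΨ' : Ψᵀ * Ψ = 1 := mul_eq_one_comm.mp hΨ
  have hLi : L⁻¹ = Ψ * diagonal (fun i => (a i)⁻¹) * Ψᵀ := by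
    apply Matrix.inv_eq_right_inv
    rw [hLspec]
    calc Ψ * diagonal a * Ψᵀ * (Ψ * diagonal (fun i => (a i)⁻¹) * Ψᵀ)
        = Ψ * (diagonal a * (Ψᵀ * Ψ) * diagonal (fun i => (a i)⁻¹)) * Ψᵀ := by
          simp only [Matrix.mul_assoc]
      _ = Ψ * (diagonal a * diagonal (fun i => (a i)⁻¹)) * Ψᵀ := by
          rw [hΨ', Matrix.mul_one]
      _ = 1 := by
          rw [diagonal_mul_diagonal]
          have : (fun i => a i * (a i)⁻¹) = fun _ => (1:ℝ) := by
            funext i; exact mul_inv_cancel₀ (ha i)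
          rw [this, diagonal_one, Matrix.mul_one, hΨ]
  have hLiT : (L⁻¹)ᵀ = L⁻¹ := by
    rw [hLi]
    simp [Matrix.transpose_mul, Matrix.transpose_transpose, Matrix.diagonal_transpose,
      Matrix.mul_assoc]
  set G := (Xᵀ * L⁻¹ * X)⁻¹ with hG
  have hdet : IsUnit (Xᵀ * L⁻¹ * X).det := (Matrix.isUnit_iff_isUnit_det _).mp hX
  have hGl : G * (Xᵀ * L⁻¹ * X) = 1 := Matrix.nonsing_inv_mul _ hdet
  have hGr : (Xᵀ * L⁻¹ * X) * G = 1 := Matrix.mul_nonsing_inv _ hdet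
  have hBT : (Xᵀ * L⁻¹ * X)ᵀ = Xᵀ * L⁻¹ * X := by
    simp [Matrix.transpose_mul, hLiT, Matrix.mul_assoc]
  have hGT : Gᵀ = G := by
    rw [hG, Matrix.transpose_nonsing_inv, hBT]
  set E := X * G * Xᵀ with hE
  have hET : Eᵀ = E := by
    rw [hE]
    simp [Matrix.transpose_mul, hGT, Matrix.mul_assoc]
  have hMkE : Mk = 1 - E * L⁻¹ := by rw [hMk, hE]
  have hMkT : Mkᵀ = 1 - L⁻¹ * E := by
    rw [hMkE]
    simp [Matrix.transpose_sub, Matrix.transpose_mul, hET, hLiT]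
  have hELE : E * (L⁻¹ * E) = E := by
    rw [hE]
    calc X * G * Xᵀ * (L⁻¹ * (X * G * Xᵀ))
        = X * (G * (Xᵀ * L⁻¹ * X)) * (G * Xᵀ) := by simp only [Matrix.mul_assoc]
      _ = X * G * Xᵀ := by rw [hGl, Matrix.mul_one, Matrix.mul_assoc]
  have key : Mkᵀ * L⁻¹ * Mk = L⁻¹ - L⁻¹ * E * L⁻¹ := by
    rw [hMkT, hMkE]
    have h2 : L⁻¹ * (E * (L⁻¹ * E)) * L⁻¹ = L⁻¹ * E * L⁻¹ := by rw [hELE]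
    calc (1 - L⁻¹ * E) * L⁻¹ * (1 - E * L⁻¹)
        = L⁻¹ - L⁻¹ * E * L⁻¹ - L⁻¹ * E * L⁻¹ + L⁻¹ * (E * (L⁻¹ * E)) * L⁻¹ := by
          noncomm_ring
      _ = L⁻¹ - L⁻¹ * E * L⁻¹ := by rw [h2]; noncomm_ring
  have main : Wᵀ * L⁻¹ * W - Wᵀ * Mkᵀ * L⁻¹ * Mk * W = Wᵀ * (L⁻¹ * E * L⁻¹) * W := by
    have : Wᵀ * Mkᵀ * L⁻¹ * Mk * W = Wᵀ * (Mkᵀ * L⁻¹ * Mk) * W := by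
      simp only [Matrix.mul_assoc]
    rw [this, key]
    noncomm_ring
  -- PSD of the middle matrix
  have hLiPSD : (L⁻¹).PosSemidef := hL.inv.posSemidef
  have hGPSD : G.PosSemidef := by
    have h1 : (Xᵀ * L⁻¹ * X).PosSemidef := by
      have := hLiPSD.conjTranspose_mul_mul_same X
      rwa [Matrix.conjTranspose_eq_transpose_of_trivial] at this
    exact h1.inv
  have hMidPSD : (L⁻¹ * E * L⁻¹).PosSemidef := by
    have h1 := hGPSD.conjTranspose_mul_mul_same (Xᵀ * L⁻¹)
    rw [Matrix.conjTranspose_eq_transpose_of_trivial, Matrix.transpose_mul, hLiT] at h1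
    have : L⁻¹ * Xᵀᵀ * G * (Xᵀ * L⁻¹) = L⁻¹ * E * L⁻¹ := by
      rw [hE]; simp only [Matrix.transpose_transpose, Matrix.mul_assoc]
    rwa [this] at h1
  have hAPSD : (Wᵀ * L⁻¹ * W - Wᵀ * Mkᵀ * L⁻¹ * Mk * W).PosSemidef := by
    rw [main]
    have h1 := hMidPSD.conjTranspose_mul_mul_same W
    rwa [Matrix.conjTranspose_eq_transpose_of_trivial] at h1
  constructor
  · have := hAPSD.dotProduct_mulVec_nonneg y
    simpa using this
  · -- upper bound
    have hdiagPSD : (C • (1 : Matrix (Fin n) (Fin n) ℝ) - Wᵀ * L⁻¹ * W).PosSemidef := by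
      have hWT : Wᵀ = Ψ * diagonal b * Ψᵀ := by
        rw [hW]
        simp [Matrix.transpose_mul, Matrix.diagonal_transpose, Matrix.mul_assoc]
      have hWLW : Wᵀ * L⁻¹ * W = Ψ * diagonal (fun i => b i * (a i)⁻¹ * b i) * Ψᵀ := by
        rw [hWT, hLi, hW]
        calc Ψ * diagonal b * Ψᵀ * (Ψ * diagonal (fun i => (a i)⁻¹) * Ψᵀ) *
              (Ψ * diagonal b * Ψᵀ)
            = Ψ * (diagonal b * (Ψᵀ * Ψ) * diagonal (fun i => (a i)⁻¹) * (Ψᵀ * Ψ) *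
                diagonal b) * Ψᵀ := by simp only [Matrix.mul_assoc]
          _ = Ψ * (diagonal b * diagonal (fun i => (a i)⁻¹) * diagonal b) * Ψᵀ := by
              rw [hΨ']; simp only [Matrix.mul_one]
          _ = Ψ * diagonal (fun i => b i * (a i)⁻¹ * b i) * Ψᵀ := by
              rw [diagonal_mul_diagonal, diagonal_mul_diagonal]
      have hone : C • (1 : Matrix (Fin n) (Fin n) ℝ) = Ψ * diagonal (fun _ => C) * Ψᵀ := by
        rw [← Matrix.smul_one_eq_diagonal]
        rw [mul_smul_comm, smul_mul_assoc, Matrix.mul_one, hΨ]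
      rw [hWLW, hone]
      have : Ψ * diagonal (fun _ => C) * Ψᵀ - Ψ * diagonal (fun i => b i * (a i)⁻¹ * b i) * Ψᵀ
          = Ψ * diagonal (fun i => C - b i * (a i)⁻¹ * b i) * Ψᵀ := by
        rw [← Matrix.diagonal_sub]
        noncomm_ring
      rw [this]
      have hd : (diagonal (fun i => C - b i * (a i)⁻¹ * b i)).PosSemidef := by
        rw [posSemidef_diagonal_iff]
        intro i
        simpa using hC i
      have h1 := hd.mul_mul_conjTranspose_same Ψ
      rwa [Matrix.conjTranspose_eq_transpose_of_trivial] at h1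
    have hsand : (Wᵀ * Mkᵀ * L⁻¹ * Mk * W).PosSemidef := by
      have h1 := hLiPSD.conjTranspose_mul_mul_same (Mk * W)
      rw [Matrix.conjTranspose_eq_transpose_of_trivial, Matrix.transpose_mul] at h1
      have : Wᵀ * Mkᵀ * L⁻¹ * (Mk * W) = Wᵀ * Mkᵀ * L⁻¹ * Mk * W := by
        simp only [Matrix.mul_assoc]
      rwa [this] at h1
    have hsum : (C • (1 : Matrix (Fin n) (Fin n) ℝ) -
        (Wᵀ * L⁻¹ * W - Wᵀ * Mkᵀ * L⁻¹ * Mk * W)).PosSemidef := by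
      have heq : C • (1 : Matrix (Fin n) (Fin n) ℝ) -
          (Wᵀ * L⁻¹ * W - Wᵀ * Mkᵀ * L⁻¹ * Mk * W)
          = (C • (1 : Matrix (Fin n) (Fin n) ℝ) - Wᵀ * L⁻¹ * W) +
            Wᵀ * Mkᵀ * L⁻¹ * Mk * W := by abel
      rw [heq]
      exact hdiagPSD.add hsand
    have h2 := hsum.dotProduct_mulVec_nonneg y
    have h3 : star y = y := by simp
    rw [h3, Matrix.sub_mulVec, dotProduct_sub, Matrix.smul_mulVec,
      Matrix.one_mulVec, dotProduct_smul, smul_eq_mul] at h2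
    linarith

lemma measurable_quadForm {n : ℕ} (A : Matrix (Fin n) (Fin n) ℝ) :
    Measurable (fun y : Fin n → ℝ => y ⬝ᵥ A.mulVec y) := by
  have : (fun y : Fin n → ℝ => y ⬝ᵥ A.mulVec y) = fun y => ∑ i, y i * ∑ j, A i j * y j := by
    funext y; simp [dotProduct, Matrix.mulVec]
  rw [this]
  exact Finset.measurable_sum _ fun i _ => (measurable_pi_apply i).mul
    (Finset.measurable_sum _ fun j _ => (measurable_pi_apply j).const_mul _)

/-- Under the `W` construction, Condition (C2), Condition (D)
and square-summability of `(βₖ)`, with `Mₖ = I − X(XᵀΛₖ⁻¹X)⁻¹XᵀΛₖ⁻¹`, the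
expected transformed sum of squares due to regression
`Σₖ E[Yₖᵀ(WₖᵀΛₖ⁻¹Wₖ − WₖᵀMₖᵀΛₖ⁻¹MₖWₖ)Yₖ]` is finite, and the corresponding
random series converges almost surely. -/
theorem transformed_SSR_as_finite {n p : ℕ} (hn : 0 < n) (hp : 0 < p)
    (Λ : ℕ → Matrix (Fin n) (Fin n) ℝ) (hΛ : ∀ k, (Λ k).PosDef)
    (hΛtr : Summable fun k => (Λ k).trace)
    (X : Matrix (Fin n) (Fin p) ℝ) (hX : ∀ k, IsUnit (Xᵀ * (Λ k)⁻¹ * X))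
    (β : ℕ → Fin p → ℝ) (hβ : Summable fun k => ∑ i, (β k i) ^ 2)
    -- the W construction (sequences indexed by `k ≥ 1`, formalized as `k+1` for `k : ℕ`)
    (Ψ : ℕ → Matrix (Fin n) (Fin n) ℝ) (hΨ : ∀ k, Ψ k * (Ψ k)ᵀ = 1)
    (ωΛ : ℕ → Fin n → ℝ) (hωΛpos : ∀ k i, 0 < ωΛ k i)
    (hΛspec : ∀ k, Λ k = Ψ k * diagonal (ωΛ k) * (Ψ k)ᵀ)
    (ωW : ℕ → Fin n → ℝ) (hωWpos : ∀ k i, 0 < ωW k i)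
    (W : ℕ → Matrix (Fin n) (Fin n) ℝ)
    (hW : ∀ k, W k = Ψ k * diagonal (ωW k) * (Ψ k)ᵀ)
    -- Condition (C2)
    (M c : ℝ) (hM : 0 < M) (hc : 0 < c)
    (ρ : Fin n → ℝ) (hρ : ∀ i, 0 ≤ ρ i) (ϱ : Fin n → ℝ) (hϱ : ∀ i, 1 < ϱ i)
    (hCW : ∀ (k : ℕ) i, ωW k i ≤ M * ((k : ℝ) + 1) ^ (-(ρ i + ϱ i)))
    (hCΛ : ∀ (k : ℕ) i, c * ((k : ℝ) + 1) ^ (-ρ i) ≤ ωΛ k i)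
    -- Condition (D)
    (hD : Summable fun k => ((Xᵀ * (Λ k)⁻¹ * X)⁻¹).trace)
    -- the random vectors
    {Ω : Type*} [MeasurableSpace Ω] (P : Measure Ω) [IsProbabilityMeasure P]
    (Y : ℕ → Ω → Fin n → ℝ) (hYmeas : ∀ k, Measurable (Y k))
    (hYindep : iIndepFun Y P)
    (hYlaw : ∀ k, P.map (Y k) = multivariateGaussian (X.mulVec (β k)) (Λ k))
    (Mk : ℕ → Matrix (Fin n) (Fin n) ℝ)
    (hMk : ∀ k, Mk k = 1 - X * (Xᵀ * (Λ k)⁻¹ * X)⁻¹ * Xᵀ * (Λ k)⁻¹)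
    :
    (Summable fun k =>
        ∫ ω, Y k ω ⬝ᵥ ((W k)ᵀ * (Λ k)⁻¹ * W k - (W k)ᵀ * (Mk k)ᵀ * (Λ k)⁻¹ * Mk k * W k).mulVec (Y k ω) ∂P) ∧
    (∀ᵐ ω ∂P, Summable fun k =>
        Y k ω ⬝ᵥ ((W k)ᵀ * (Λ k)⁻¹ * W k - (W k)ᵀ * (Mk k)ᵀ * (Λ k)⁻¹ * Mk k * W k).mulVec (Y k ω)) := by
  classical
  set π : Measure (Fin n → ℝ) := Measure.pi fun _ : Fin n => gaussianReal 0 1 with hπ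
  haveI : IsProbabilityMeasure π := by rw [hπ]; infer_instance
  set f : (Fin n → ℝ) → ℝ := fun v => ∑ i, v i ^ 2 with hf
  have hfm : Measurable f :=
    Finset.measurable_sum _ fun i _ => (measurable_pi_apply i).pow_const 2
  have hfnonneg : ∀ v, 0 ≤ f v := fun v => Finset.sum_nonneg fun i _ => sq_nonneg _
  set Cq : ℝ := M ^ 2 / c with hCq
  have hCq0 : 0 ≤ Cq := by rw [hCq]; positivity
  let A : ℕ → Matrix (Fin n) (Fin n) ℝ := fun k =>
    (W k)ᵀ * (Λ k)⁻¹ * W k - (W k)ᵀ * (Mk k)ᵀ * (Λ k)⁻¹ * Mk k * W k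
  let q : ℕ → Ω → ℝ := fun k ω => Y k ω ⬝ᵥ (A k).mulVec (Y k ω)
  show (Summable fun k => ∫ ω, q k ω ∂P) ∧ (∀ᵐ ω ∂P, Summable fun k => q k ω)
  have hkey : ∀ (k : ℕ) (y : Fin n → ℝ),
      0 ≤ y ⬝ᵥ (A k).mulVec y ∧ y ⬝ᵥ (A k).mulVec y ≤ Cq * (y ⬝ᵥ y) := fun k y =>
    matrix_quad_key (Λ k) (hΛ k) X (hX k) (Ψ k) (hΨ k) (ωΛ k) (ωW k)
      (fun i => (hωΛpos k i).ne') (hΛspec k) (W k) (hW k) (Mk k) (hMk k) Cq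
      (fun i => by
        rw [hCq]
        exact c2_bound hM hc (hρ i) (hϱ i) k (hωWpos k i) (hωΛpos k i) (hCW k i) (hCΛ k i)) y
  have hdot : ∀ y : Fin n → ℝ, y ⬝ᵥ y = f y := fun y => by
    simp [hf, dotProduct, pow_two]
  have hqmeas : ∀ k, Measurable (q k) := fun k => (measurable_quadForm (A k)).comp (hYmeas k)
  -- transport of the second moment
  have Hk : ∀ k, Integrable (fun ω => f (Y k ω)) P ∧
      ∫ ω, f (Y k ω) ∂P
        ≤ 2 * f (X.mulVec (β k)) + (2 * (Λ k).trace) * (∫ x, f x ∂π) := by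
    intro k
    set Q : Matrix (Fin n) (Fin n) ℝ := ((hΛ k).posSemidef).sqrt with hQ
    set μk : Fin n → ℝ := X.mulVec (β k) with hμk
    set T : (Fin n → ℝ) → (Fin n → ℝ) := fun x => μk + Q.mulVec x with hTdef
    have hmap : P.map (Y k) = π.map T := by
      rw [hYlaw k, _root_.multivariateGaussian, dif_pos (hΛ k).posSemidef]
    have hT : Measurable T := by
      apply measurable_pi_lambda
      intro i
      have : (fun x : Fin n → ℝ => T x i) = fun x => μk i + ∑ j, Q i j * x j := by
        funext x; simp [hTdef, Matrix.mulVec, dotProduct]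
      rw [this]
      exact measurable_const.add
        (Finset.measurable_sum _ fun j _ => (measurable_pi_apply j).const_mul _)
    have hQQ : Q * Q = Λ k := psd_sqrt_mul_self _
    have hQsymm : ∀ i j, Q j i = Q i j := by
      intro i j
      have h1 : Qᴴ = Q := psd_sqrt_conjTranspose _
      have h2 : Qᴴ i j = Q i j := by rw [h1]
      simpa [Matrix.conjTranspose_apply] using h2
    have hFrob : ∑ i, ∑ j, Q i j ^ 2 = (Λ k).trace := by
      rw [← hQQ]
      simp only [Matrix.trace, Matrix.diag, Matrix.mul_apply]
      refine Finset.sum_congr rfl fun i _ => Finset.sum_congr rfl fun j _ => ?_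
      rw [hQsymm i j]; ring
    have hpt : ∀ x, f (T x) ≤ 2 * f μk + (2 * (Λ k).trace) * f x := by
      intro x
      have hrow : ∀ i, (Q.mulVec x i) ^ 2 ≤ (∑ j, Q i j ^ 2) * (∑ j, x j ^ 2) := by
        intro i
        have := Finset.sum_mul_sq_le_sq_mul_sq Finset.univ (fun j => Q i j) x
        simpa [Matrix.mulVec, dotProduct] using this
      calc f (T x) = ∑ i, (μk i + Q.mulVec x i) ^ 2 := by
            simp [hf, hTdef]
        _ ≤ ∑ i, (2 * μk i ^ 2 + 2 * (Q.mulVec x i) ^ 2) :=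
            Finset.sum_le_sum fun i _ => by nlinarith [sq_nonneg (μk i - Q.mulVec x i)]
        _ = 2 * f μk + 2 * ∑ i, (Q.mulVec x i) ^ 2 := by
            rw [Finset.sum_add_distrib, ← Finset.mul_sum, ← Finset.mul_sum]
        _ ≤ 2 * f μk + 2 * ((Λ k).trace * f x) := by
            have : ∑ i, (Q.mulVec x i) ^ 2 ≤ (Λ k).trace * f x := by
              calc ∑ i, (Q.mulVec x i) ^ 2
                  ≤ ∑ i, (∑ j, Q i j ^ 2) * (∑ j, x j ^ 2) :=
                    Finset.sum_le_sum fun i _ => hrow i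
                _ = (∑ i, ∑ j, Q i j ^ 2) * (∑ j, x j ^ 2) := by rw [Finset.sum_mul]
                _ = (Λ k).trace * f x := by rw [hFrob]
            linarith
        _ = 2 * f μk + (2 * (Λ k).trace) * f x := by ring
    have hb_int : Integrable (fun x => 2 * f μk + (2 * (Λ k).trace) * f x) π :=
      (integrable_const _).add ((pi_integrable_normsq n).const_mul _)
    have hfT_nonneg : ∀ x, 0 ≤ f (T x) := fun x => hfnonneg _
    have hfT_int : Integrable (fun x => f (T x)) π :=
      hb_int.mono' ((hfm.comp hT)).aestronglyMeasurable
        (ae_of_all _ fun x => by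
          rw [Real.norm_eq_abs, abs_of_nonneg (hfT_nonneg x)]; exact hpt x)
    have h1 : ∫ y, f y ∂(P.map (Y k)) = ∫ ω, f (Y k ω) ∂P :=
      integral_map (hYmeas k).aemeasurable hfm.aestronglyMeasurable
    have h2 : ∫ y, f y ∂(π.map T) = ∫ x, f (T x) ∂π :=
      integral_map hT.aemeasurable hfm.aestronglyMeasurable
    have hval : ∫ ω, f (Y k ω) ∂P = ∫ x, f (T x) ∂π := by rw [← h1, hmap, h2]
    have hint_gk : Integrable (fun ω => f (Y k ω)) P := by
      have h5 : Integrable f (P.map (Y k)) := by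
        rw [hmap]
        exact (integrable_map_measure hfm.aestronglyMeasurable hT.aemeasurable).mpr hfT_int
      exact (integrable_map_measure hfm.aestronglyMeasurable (hYmeas k).aemeasurable).mp h5
    refine ⟨hint_gk, ?_⟩
    rw [hval]
    calc ∫ x, f (T x) ∂π ≤ ∫ x, (2 * f μk + (2 * (Λ k).trace) * f x) ∂π :=
        integral_mono hfT_int hb_int hpt
      _ = 2 * f μk + (2 * (Λ k).trace) * (∫ x, f x ∂π) := by
        rw [integral_add (integrable_const _) ((pi_integrable_normsq n).const_mul _),
          integral_const, integral_const_mul]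
        simp
        exact Or.inl rfl
  -- summability of the bounds
  have hμbound : ∀ k, f (X.mulVec (β k)) ≤ (∑ i, ∑ j, X i j ^ 2) * ∑ j, (β k j) ^ 2 := by
    intro k
    have hrow : ∀ i, (X.mulVec (β k) i) ^ 2 ≤ (∑ j, X i j ^ 2) * (∑ j, (β k j) ^ 2) := by
      intro i
      have := Finset.sum_mul_sq_le_sq_mul_sq Finset.univ (fun j => X i j) (β k)
      simpa [Matrix.mulVec, dotProduct] using this
    calc f (X.mulVec (β k)) = ∑ i, (X.mulVec (β k) i) ^ 2 := by simp [hf]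
      _ ≤ ∑ i, (∑ j, X i j ^ 2) * (∑ j, (β k j) ^ 2) := Finset.sum_le_sum fun i _ => hrow i
      _ = (∑ i, ∑ j, X i j ^ 2) * ∑ j, (β k j) ^ 2 := by rw [Finset.sum_mul]
  have hu : Summable (fun k =>
      2 * f (X.mulVec (β k)) + (2 * (Λ k).trace) * (∫ x, f x ∂π)) := by
    apply Summable.add
    · apply Summable.of_nonneg_of_le (fun k => by
        have := hfnonneg (X.mulVec (β k)); linarith)
        (fun k => ?_) (hβ.mul_left (2 * (∑ i, ∑ j, X i j ^ 2)))
      have := hμbound k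
      nlinarith [hfnonneg (X.mulVec (β k))]
    · exact (hΛtr.mul_left 2).mul_right _
  have hq_int : ∀ k, Integrable (q k) P := by
    intro k
    refine ((Hk k).1.const_mul Cq).mono' (hqmeas k).aestronglyMeasurable
      (ae_of_all _ fun ω => ?_)
    rw [Real.norm_eq_abs, abs_of_nonneg (hkey k _).1]
    calc q k ω ≤ Cq * (Y k ω ⬝ᵥ Y k ω) := (hkey k _).2
      _ = Cq * f (Y k ω) := by rw [hdot]
  have hq_nonneg_int : ∀ k, 0 ≤ ∫ ω, q k ω ∂P := fun k =>
    integral_nonneg fun ω => (hkey k _).1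
  have hq_val : ∀ k, ∫ ω, q k ω ∂P
      ≤ Cq * (2 * f (X.mulVec (β k)) + (2 * (Λ k).trace) * (∫ x, f x ∂π)) := by
    intro k
    calc ∫ ω, q k ω ∂P ≤ ∫ ω, Cq * f (Y k ω) ∂P := by
          refine integral_mono (hq_int k) ((Hk k).1.const_mul Cq) fun ω => ?_
          calc q k ω ≤ Cq * (Y k ω ⬝ᵥ Y k ω) := (hkey k _).2
            _ = Cq * f (Y k ω) := by rw [hdot]
      _ = Cq * ∫ ω, f (Y k ω) ∂P := integral_const_mul _ _
      _ ≤ Cq * (2 * f (X.mulVec (β k)) + (2 * (Λ k).trace) * (∫ x, f x ∂π)) :=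
          mul_le_mul_of_nonneg_left (Hk k).2 hCq0
  have hsummable : Summable fun k => ∫ ω, q k ω ∂P :=
    Summable.of_nonneg_of_le hq_nonneg_int hq_val (hu.mul_left Cq)
  refine ⟨hsummable, ?_⟩
  have hmeas_tsum : Measurable fun ω => ∑' k, ENNReal.ofReal (q k ω) :=
    Measurable.ennreal_tsum fun k => (hqmeas k).ennreal_ofReal
  have hlt : ∀ᵐ ω ∂P, (∑' k, ENNReal.ofReal (q k ω)) < ⊤ := by
    apply ae_lt_top hmeas_tsum
    rw [lintegral_tsum (fun k => ((hqmeas k).ennreal_ofReal).aemeasurable)]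
    have heq2 : ∀ k, ∫⁻ ω, ENNReal.ofReal (q k ω) ∂P = ENNReal.ofReal (∫ ω, q k ω ∂P) :=
      fun k => (ofReal_integral_eq_lintegral_ofReal (hq_int k)
        (ae_of_all _ fun ω => (hkey k _).1)).symm
    rw [tsum_congr heq2, ← ENNReal.ofReal_tsum_of_nonneg hq_nonneg_int hsummable]
    exact ENNReal.ofReal_ne_top
  filter_upwards [hlt] with ω hω
  have h7 : Summable fun k => (ENNReal.ofReal (q k ω)).toReal := ENNReal.summable_toReal hω.ne
  exact h7.congr fun k => ENNReal.toReal_ofReal (hkey k _).1
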